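/- If E ⊆ 𝔽_q² and Θ ⊆ 𝔽_q satisfy |E|·|Θ| > q², then there exists θ ∈ Θ with |E·(1,θ)| > q/2. -/

import Mathlib

open Finset

theorem good_direction_large
    {F : Type*} [Field F] [Fintype F] [DecidableEq F] (q : ℕ) (hq : Fintype.card F = q)
    (E : Finset (F × F)) (Θ : Finset F) (h : E.card * Θ.card > q ^ 2) :
    ∃ θ ∈ Θ, ((E.image (fun v : F × F => v.1 + θ * v.2)).card : ℝ) > (q : ℝ) / 2 := by
  classical
  set a := E.card with ha_def
  set b := Θ.card with hb_def
  -- collision count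
  set coll : F → ℕ := fun θ =>
    ((E ×ˢ E).filter (fun p : (F × F) × (F × F) =>
      p.1.1 + θ * p.1.2 = p.2.1 + θ * p.2.2)).card with hcoll_def
  set m : F → ℕ := fun θ => (E.image (fun v : F × F => v.1 + θ * v.2)).card with hm_def
  have hq1 : 1 ≤ q := by
    rw [← hq]; exact Fintype.card_pos
  -- Cauchy-Schwarz: a^2 ≤ m θ * coll θ
  have hCS : ∀ θ : F, (a : ℤ) ^ 2 ≤ (m θ : ℤ) * (coll θ : ℤ) := by
    intro θ
    set g : F × F → F := fun v => v.1 + θ * v.2 with hg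
    set I : Finset F := E.image g with hI
    have hfib : a = ∑ t ∈ I, (E.filter (fun v => g v = t)).card :=
      card_eq_sum_card_fiberwise (fun x hx => mem_image_of_mem _ hx)
    have hcollfib : coll θ = ∑ t ∈ I, ((E.filter (fun v => g v = t)).card) ^ 2 := by
      have h1 : coll θ = ∑ t ∈ I,
          (((E ×ˢ E).filter (fun p : (F × F) × (F × F) => g p.1 = g p.2)).filter
            (fun p => g p.1 = t)).card := by
        apply card_eq_sum_card_fiberwise
        intro p hp
        simp only [mem_coe, mem_filter, mem_product] at hp
        exact mem_image_of_mem _ hp.1.1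
      rw [h1]
      refine Finset.sum_congr rfl fun t ht => ?_
      have : (((E ×ˢ E).filter (fun p : (F × F) × (F × F) => g p.1 = g p.2)).filter
            (fun p => g p.1 = t)) =
          (E.filter (fun v => g v = t)) ×ˢ (E.filter (fun v => g v = t)) := by
        ext p
        simp only [mem_filter, mem_product]
        constructor
        · rintro ⟨⟨⟨h1, h2⟩, h3⟩, h4⟩
          exact ⟨⟨h1, h4⟩, h2, h4 ▸ h3.symm⟩
        · rintro ⟨⟨h1, h2⟩, h3, h4⟩
          exact ⟨⟨⟨h1, h3⟩, by rw [h2, h4]⟩, h2⟩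
      rw [this, card_product, sq]
    have key : ((∑ t ∈ I, (E.filter (fun v => g v = t)).card : ℕ) : ℤ) ^ 2 ≤
        (I.card : ℤ) * ((∑ t ∈ I, ((E.filter (fun v => g v = t)).card) ^ 2 : ℕ) : ℤ) := by
      push_cast
      exact sq_sum_le_card_mul_sum_sq
    rw [hfib, hcollfib]
    exact key
  -- m θ ≤ q
  have hmq : ∀ θ : F, m θ ≤ q := by
    intro θ
    rw [← hq]
    exact card_le_univ _
  -- sum of collisions over all θ
  have hsum : ∑ θ : F, coll θ ≤ a * q + a * a := by
    have h1 : ∀ θ : F, coll θ = ∑ p ∈ E ×ˢ E,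
        if p.1.1 + θ * p.1.2 = p.2.1 + θ * p.2.2 then 1 else 0 := by
      intro θ; exact Finset.card_filter _ _
    calc ∑ θ : F, coll θ
        = ∑ p ∈ E ×ˢ E, ∑ θ : F,
            (if p.1.1 + θ * p.1.2 = p.2.1 + θ * p.2.2 then 1 else 0) := by
          simp_rw [h1]; rw [Finset.sum_comm]
      _ = ∑ p ∈ E ×ˢ E,
            (Finset.univ.filter (fun θ : F =>
              p.1.1 + θ * p.1.2 = p.2.1 + θ * p.2.2)).card := by
          refine Finset.sum_congr rfl fun p _ => ?_
          exact (Finset.card_filter _ _).symm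
      _ ≤ ∑ p ∈ E ×ˢ E, (if p.1 = p.2 then q else 1) := by
          refine Finset.sum_le_sum fun p _ => ?_
          by_cases hp : p.1 = p.2
          · simp only [hp, if_true]
            rw [← hq]
            exact (card_filter_le _ _).trans (by simp)
          · simp only [hp, if_false]
            apply Finset.card_le_one.mpr
            intro θ1 hθ1 θ2 hθ2
            simp only [mem_filter, mem_univ, true_and] at hθ1 hθ2
            by_contra hne
            have h2 : p.1.2 ≠ p.2.2 → θ1 = θ2 := by
              intro hv
              have : (θ1 - θ2) * (p.1.2 - p.2.2) = 0 := by linear_combination hθ1 - hθ2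
              rcases mul_eq_zero.mp this with h | h
              · exact sub_eq_zero.mp h
              · exact absurd (sub_eq_zero.mp h) hv
            by_cases hv : p.1.2 = p.2.2
            · have h11 : p.1.1 = p.2.1 := by
                have := hθ1
                rw [hv] at this
                exact add_right_cancel this
              exact hp (Prod.ext h11 hv)
            · exact hne (h2 hv)
      _ ≤ a * q + a * a := by
          rw [Finset.sum_ite]
          have hd : ((E ×ˢ E).filter (fun p => p.1 = p.2)).card ≤ a := by
            apply Finset.card_le_card_of_injOn Prod.fst
            · intro p hp
              simp only [mem_coe, mem_filter, mem_product] at hp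
              exact hp.1.1
            · intro p hp p' hp' hpp
              simp only [coe_filter, Set.mem_setOf_eq, mem_product] at hp hp'
              exact Prod.ext hpp (by rw [← hp.2, ← hp'.2, hpp])
          have hnd : ((E ×ˢ E).filter (fun p => ¬ p.1 = p.2)).card ≤ a * a := by
            calc ((E ×ˢ E).filter (fun p => ¬ p.1 = p.2)).card ≤ (E ×ˢ E).card :=
                  card_filter_le _ _
              _ = a * a := by rw [card_product]
          simp only [Finset.sum_const, smul_eq_mul, Finset.sum_const, mul_one]
          have := Nat.mul_le_mul_right q hd
          omega
  -- positivity facts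
  have hab : q ^ 2 < a * b := h
  have hbpos : 0 < b := by
    rcases Nat.eq_zero_or_pos b with h0 | h0
    · rw [h0, mul_zero] at hab; omega
    · exact h0
  have hapos : 0 < a := by
    rcases Nat.eq_zero_or_pos a with h0 | h0
    · rw [h0, zero_mul] at hab; omega
    · exact h0
  -- choose θ₀ minimizing coll on Θ
  obtain ⟨θ₀, hθ₀Θ, hθ₀min⟩ := Finset.exists_min_image Θ coll (Finset.card_pos.mp hbpos)
  refine ⟨θ₀, hθ₀Θ, ?_⟩
  -- each term q * coll θ - a^2 is nonneg
  have hterm : ∀ θ : F, (a : ℤ) ^ 2 ≤ (q : ℤ) * (coll θ : ℤ) := by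
    intro θ
    calc (a : ℤ) ^ 2 ≤ (m θ : ℤ) * (coll θ : ℤ) := hCS θ
      _ ≤ (q : ℤ) * (coll θ : ℤ) := by
          have := hmq θ
          have h0 : (0 : ℤ) ≤ (coll θ : ℤ) := Int.natCast_nonneg _
          exact mul_le_mul_of_nonneg_right (by exact_mod_cast this) h0
  -- sum bound over Θ in ℤ
  have hsumΘ : ∑ θ ∈ Θ, ((q : ℤ) * (coll θ : ℤ) - (a : ℤ) ^ 2) ≤ (a : ℤ) * (q : ℤ) ^ 2 := by
    calc ∑ θ ∈ Θ, ((q : ℤ) * (coll θ : ℤ) - (a : ℤ) ^ 2)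
        ≤ ∑ θ : F, ((q : ℤ) * (coll θ : ℤ) - (a : ℤ) ^ 2) := by
          apply Finset.sum_le_sum_of_subset_of_nonneg (Finset.subset_univ Θ)
          intro θ _ _
          linarith [hterm θ]
      _ = (q : ℤ) * (∑ θ : F, (coll θ : ℤ)) - (q : ℤ) * (a : ℤ) ^ 2 := by
          rw [Finset.sum_sub_distrib, ← Finset.mul_sum, Finset.sum_const, Finset.card_univ, hq]
          ring
      _ ≤ (a : ℤ) * (q : ℤ) ^ 2 := by
          have h1 : (∑ θ : F, (coll θ : ℤ)) ≤ (a : ℤ) * q + (a : ℤ) * a := by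
            have := hsum
            push_cast [← Nat.cast_sum]
            exact_mod_cast this
          nlinarith [h1, hq1]
  -- min term times card
  have hmin : (b : ℤ) * ((q : ℤ) * (coll θ₀ : ℤ) - (a : ℤ) ^ 2) ≤ (a : ℤ) * (q : ℤ) ^ 2 := by
    calc (b : ℤ) * ((q : ℤ) * (coll θ₀ : ℤ) - (a : ℤ) ^ 2)
        ≤ ∑ θ ∈ Θ, ((q : ℤ) * (coll θ : ℤ) - (a : ℤ) ^ 2) := by
          rw [hb_def]
          have := Finset.card_nsmul_le_sum Θ
            (fun θ => (q : ℤ) * (coll θ : ℤ) - (a : ℤ) ^ 2)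
            ((q : ℤ) * (coll θ₀ : ℤ) - (a : ℤ) ^ 2)
            (fun θ hθ => by
              have := hθ₀min θ hθ
              have h0 : (coll θ₀ : ℤ) ≤ (coll θ : ℤ) := by exact_mod_cast this
              have hq0 : (0 : ℤ) ≤ (q : ℤ) := Int.natCast_nonneg _
              linarith [mul_le_mul_of_nonneg_left h0 hq0])
          simpa [nsmul_eq_mul] using this
      _ ≤ (a : ℤ) * (q : ℤ) ^ 2 := hsumΘ
  -- final arithmetic: q < 2 * m θ₀
  have hfinal : q < 2 * m θ₀ := by
    by_contra hcon
    push_neg at hcon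
    have hm2 : (2 : ℤ) * (m θ₀ : ℤ) ≤ (q : ℤ) := by exact_mod_cast hcon
    have H1 : (q : ℤ) * (b : ℤ) * (coll θ₀ : ℤ) ≤ (b : ℤ) * (a : ℤ) ^ 2 + (a : ℤ) * (q : ℤ) ^ 2 := by
      nlinarith [hmin]
    have H2 : (a : ℤ) ^ 2 ≤ (m θ₀ : ℤ) * (coll θ₀ : ℤ) := hCS θ₀
    have H3 : ((q : ℤ)) ^ 2 < (a : ℤ) * (b : ℤ) := by exact_mod_cast hab
    have haZ : (1 : ℤ) ≤ (a : ℤ) := by exact_mod_cast hapos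
    have hbZ : (1 : ℤ) ≤ (b : ℤ) := by exact_mod_cast hbpos
    have hqZ : (1 : ℤ) ≤ (q : ℤ) := by exact_mod_cast hq1
    have hmZ : (0 : ℤ) ≤ (m θ₀ : ℤ) := Int.natCast_nonneg _
    have hcZ : (0 : ℤ) ≤ (coll θ₀ : ℤ) := Int.natCast_nonneg _
    have h4 : (q : ℤ) * (b : ℤ) * ((a : ℤ) ^ 2) ≤ (q : ℤ) * (b : ℤ) * ((m θ₀ : ℤ) * (coll θ₀ : ℤ)) :=
      mul_le_mul_of_nonneg_left H2 (by positivity)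
    have h5 : (m θ₀ : ℤ) * ((q : ℤ) * (b : ℤ) * (coll θ₀ : ℤ)) ≤
        (m θ₀ : ℤ) * ((b : ℤ) * (a : ℤ) ^ 2 + (a : ℤ) * (q : ℤ) ^ 2) :=
      mul_le_mul_of_nonneg_left H1 hmZ
    have h7 : (2 : ℤ) * (m θ₀ : ℤ) * ((b : ℤ) * (a : ℤ) ^ 2 + (a : ℤ) * (q : ℤ) ^ 2) ≤
        (q : ℤ) * ((b : ℤ) * (a : ℤ) ^ 2 + (a : ℤ) * (q : ℤ) ^ 2) :=
      mul_le_mul_of_nonneg_right hm2 (by positivity)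
    have h8 : ((a : ℤ) * (q : ℤ)) * ((q : ℤ)) ^ 2 < ((a : ℤ) * (q : ℤ)) * ((a : ℤ) * (b : ℤ)) :=
      mul_lt_mul_of_pos_left H3 (by positivity)
    linarith [h4, h5, h7, h8]
  -- conclude in ℝ
  have : (q : ℝ) < 2 * (m θ₀ : ℝ) := by exact_mod_cast hfinal
  rw [gt_iff_lt, div_lt_iff₀ (by norm_num : (0:ℝ) < 2)]
  calc (q : ℝ) < 2 * (m θ₀ : ℝ) := this
    _ = (m θ₀ : ℝ) * 2 := by ring
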